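/- Let (T,d) be a compact metric space, m a Borel probability measure on T, φ and ψ Young functions with φ(1)=ψ(1)=1, R > 2, and n₀ ≥ 1 an integer. Fix t ∈ T and an integer l ≥ 1, and define h_l : [0,∞) → [0,∞) by h_l(ε) := 0 for 0 ≤ ε < r_{l+1}(t); h_l(ε) := R^{k−n₀} for r_{k+1}(t) ≤ ε < r_k(t) with 1 ≤ k ≤ l; and h_l(ε) := R^{−n₀} for r_1(t) ≤ ε. Then ∫_T ψ( h_l(d(t,u)) ) m(du) ≤ Σ_{k=0}^{l} ψ(R^{k−n₀}) / φ(R^k). -/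

import Mathlib

open MeasureTheory ENNReal Filter

noncomputable section

/-- A (finite) Young function: an increasing convex function `φ : [0,∞) → [0,∞)`
with `φ 0 = 0` and `φ x → ∞` as `x → ∞`. -/
def IsYoungFunction (φ : ℝ → ℝ) : Prop :=
  MonotoneOn φ (Set.Ici 0) ∧ ConvexOn ℝ (Set.Ici 0) φ ∧ φ 0 = 0 ∧
    Tendsto φ atTop atTop

/-- Generalized inverse of a Young function, as a map `ℝ≥0∞ → ℝ≥0∞`
(so that in particular `φ⁻¹(∞) = ∞`). -/
def yinv (φ : ℝ → ℝ) (y : ℝ≥0∞) : ℝ≥0∞ :=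
  sInf {x : ℝ≥0∞ | ∃ r : ℝ, 0 ≤ r ∧ x = ENNReal.ofReal r ∧ y ≤ ENNReal.ofReal (φ r)}

/-- The minorizing metric
`τ_{m,φ}(s,t) = max_{x ∈ {s,t}} ∫_0^{d(s,t)} φ⁻¹(1 / m(B(x,ε))) dε`,
with the conventions `1/0 = ∞`, `φ⁻¹(∞) = ∞`. -/
def tauDist {T : Type*} [MetricSpace T] [MeasurableSpace T]
    (m : Measure T) (φ : ℝ → ℝ) (s t : T) : ℝ≥0∞ :=
  max (∫⁻ ε in Set.Ioc (0 : ℝ) (dist s t), yinv φ (1 / m (Metric.closedBall s ε)))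
    (∫⁻ ε in Set.Ioc (0 : ℝ) (dist s t), yinv φ (1 / m (Metric.closedBall t ε)))

/-- `f^d(u,v) = |f(u) - f(v)| / d(u,v)`, equal to `0` on the diagonal. -/
def fdiv {T : Type*} [MetricSpace T] (f : T → ℝ) (p : T × T) : ℝ :=
  |f p.1 - f p.2| / dist p.1 p.2

/-- The Luxemburg norm `|g|^ν_χ = inf {a > 0 : ∫ χ(|g|/a) dν ≤ 1}`, with value `∞`
if no such `a` exists. -/
def luxNorm {X : Type*} [MeasurableSpace X] (ν : Measure X) (χ : ℝ → ℝ)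
    (g : X → ℝ) : ℝ≥0∞ :=
  sInf {a : ℝ≥0∞ | ∃ b : ℝ, 0 < b ∧ a = ENNReal.ofReal b ∧
    ∫⁻ u, ENNReal.ofReal (χ (|g u| / b)) ∂ν ≤ 1}

/-- The Amemiya norm `‖g‖^μ_χ = inf_{a>0} a (1 + ∫ χ(|g|/a) dμ)`. -/
def amemiyaNorm {X : Type*} [MeasurableSpace X] (μ : Measure X) (χ : ℝ → ℝ)
    (g : X → ℝ) : ℝ≥0∞ :=
  sInf {c : ℝ≥0∞ | ∃ a : ℝ, 0 < a ∧
    c = ENNReal.ofReal a * (1 + ∫⁻ u, ENNReal.ofReal (χ (|g u| / a)) ∂μ)}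

/-- `r_0(x) = D(T)` and, for `k ≥ 1`,
`r_k(x) = min {ε ≥ 0 : 1 / m(B(x,ε)) ≤ φ(R^k)}` (with `1/0 = ∞`). -/
def rad {T : Type*} [MetricSpace T] [MeasurableSpace T]
    (m : Measure T) (φ : ℝ → ℝ) (R : ℝ) : ℕ → T → ℝ
  | 0, _ => Metric.diam (Set.univ : Set T)
  | k + 1, x => sInf {ε : ℝ | 0 ≤ ε ∧
      1 / m (Metric.closedBall x ε) ≤ ENNReal.ofReal (φ (R ^ (k + 1)))}

/-- `r^l_k(x) = ∑_{i=k}^{l} 2^(i-k) r_i(x)`. -/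
def radl {T : Type*} [MetricSpace T] [MeasurableSpace T]
    (m : Measure T) (φ : ℝ → ℝ) (R : ℝ) (k l : ℕ) (x : T) : ℝ :=
  ∑ i ∈ Finset.Icc k l, (2 : ℝ) ^ (i - k) * rad m φ R i x

/-- The averaging operator `S_k f (x) = (1 / m(B_k(x))) ∫_{B_k(x)} f dm`,
with the convention `0/0 = 0`. -/
def avg {T : Type*} [MetricSpace T] [MeasurableSpace T]
    (m : Measure T) (φ : ℝ → ℝ) (R : ℝ) (k : ℕ) (f : T → ℝ) (x : T) : ℝ :=
  (∫ u in Metric.closedBall x (rad m φ R k x), f u ∂m) /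
    (m (Metric.closedBall x (rad m φ R k x))).toReal

/-- The iterated averaging operator `iterAvg k l f = S_l S_{l-1} ⋯ S_k f` (for `k ≤ l`). -/
def iterAvg {T : Type*} [MetricSpace T] [MeasurableSpace T]
    (m : Measure T) (φ : ℝ → ℝ) (R : ℝ) (k : ℕ) : ℕ → (T → ℝ) → T → ℝ
  | 0, f => avg m φ R 0 f
  | l + 1, f =>
      if l + 1 ≤ k then avg m φ R (l + 1) f
      else avg m φ R (l + 1) (iterAvg m φ R k l f)

/-- The set `{k ≥ 1 : B^l_k(s) ∪ B^l_k(t) ⊆ B°(u, r_{k-1}(u)) for every u ∈ B^l_k(x)}`,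
whose greatest element is `τ_x`. -/
def tauSet {T : Type*} [MetricSpace T] [MeasurableSpace T]
    (m : Measure T) (φ : ℝ → ℝ) (R : ℝ) (l : ℕ) (s t x : T) : Set ℕ :=
  {k : ℕ | 1 ≤ k ∧ ∀ u ∈ Metric.closedBall x (radl m φ R k l x),
    Metric.closedBall s (radl m φ R k l s) ∪ Metric.closedBall t (radl m φ R k l t) ⊆
      Metric.ball u (rad m φ R (k - 1) u)}

/-- If `ε < rad m φ R (j+1) t` then `ε` fails the defining condition, so the closed ball
has small measure; taking a union we bound the open ball. -/
lemma ball_rad_measure_le {T : Type*} [MetricSpace T] [MeasurableSpace T]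
    (m : Measure T) (φ : ℝ → ℝ) (R : ℝ) (j : ℕ) (t : T)
    (hφpos : 0 < φ (R ^ (j + 1))) :
    m (Metric.ball t (rad m φ R (j + 1) t)) ≤ (ENNReal.ofReal (φ (R ^ (j + 1))))⁻¹ := by
  set c : ℝ≥0∞ := ENNReal.ofReal (φ (R ^ (j + 1))) with hcdef
  have hc0 : c ≠ 0 := by
    simp only [hcdef, ne_eq, ENNReal.ofReal_eq_zero, not_le]
    exact hφpos
  set r : ℝ := rad m φ R (j + 1) t with hrdef
  have key : ∀ ε : ℝ, 0 ≤ ε → ε < r → m (Metric.closedBall t ε) ≤ c⁻¹ := by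
    intro ε hε0 hεr
    by_contra hlt
    push_neg at hlt
    have hmem : ε ∈ {ε : ℝ | 0 ≤ ε ∧
        1 / m (Metric.closedBall t ε) ≤ ENNReal.ofReal (φ (R ^ (j + 1)))} := by
      refine ⟨hε0, ?_⟩
      rw [one_div, ← hcdef, ← inv_inv c]
      exact ENNReal.inv_le_inv.mpr hlt.le
    have hbdd : BddBelow {ε : ℝ | 0 ≤ ε ∧
        1 / m (Metric.closedBall t ε) ≤ ENNReal.ofReal (φ (R ^ (j + 1)))} :=
      ⟨0, fun x hx => hx.1⟩
    have : r ≤ ε := by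
      rw [hrdef]
      exact csInf_le hbdd hmem
    linarith
  rcases le_or_gt r 0 with h0 | h0
  · simp [Metric.ball_eq_empty.mpr h0]
  · have hsub : Metric.ball t r ⊆ ⋃ n : ℕ, Metric.closedBall t (r - r / (n + 1)) := by
      intro u hu
      have hd : dist u t < r := Metric.mem_ball.mp hu
      have hdn : 0 ≤ dist u t := dist_nonneg
      have hpos : 0 < r - dist u t := by linarith
      obtain ⟨n, hn⟩ := exists_nat_ge (r / (r - dist u t))
      refine Set.mem_iUnion.mpr ⟨n, ?_⟩
      rw [Metric.mem_closedBall]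
      have h1 : r ≤ ((n : ℝ)) * (r - dist u t) := by
        calc r = (r / (r - dist u t)) * (r - dist u t) := by field_simp
        _ ≤ (n : ℝ) * (r - dist u t) := by
            exact mul_le_mul_of_nonneg_right hn hpos.le
      have h2 : r / ((n : ℝ) + 1) ≤ r - dist u t := by
        rw [div_le_iff₀ (by positivity)]
        nlinarith
      linarith
    have hmono : Monotone (fun n : ℕ => Metric.closedBall t (r - r / (n + 1))) := by
      intro a b hab
      apply Metric.closedBall_subset_closedBall
      have : r / ((b : ℝ) + 1) ≤ r / ((a : ℝ) + 1) := by
        apply div_le_div_of_nonneg_left h0.le (by positivity)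
        exact_mod_cast by exact_mod_cast add_le_add_left (Nat.cast_le.mpr hab) 1
      linarith
    calc m (Metric.ball t r)
        ≤ m (⋃ n : ℕ, Metric.closedBall t (r - r / (n + 1))) := measure_mono hsub
      _ = ⨆ n : ℕ, m (Metric.closedBall t (r - r / (n + 1))) := hmono.measure_iUnion
      _ ≤ c⁻¹ := by
          refine iSup_le fun n => key _ ?_ ?_
          · have : r / ((n : ℝ) + 1) ≤ r := by
              rw [div_le_iff₀ (by positivity)]
              nlinarith [Nat.cast_nonneg (α := ℝ) n]
            linarith
          · have : 0 < r / ((n : ℝ) + 1) := by positivity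
            linarith

/-- inequality (4.4) of the paper. -/
theorem statement19 (T : Type) [MetricSpace T] [CompactSpace T]
    [MeasurableSpace T] [BorelSpace T]
    (m : Measure T) (hm : IsProbabilityMeasure m)
    (φ ψ : ℝ → ℝ) (hφ : IsYoungFunction φ) (hψ : IsYoungFunction ψ)
    (hφ1 : φ 1 = 1) (hψ1 : ψ 1 = 1)
    (R : ℝ) (hR : 2 < R) (n₀ : ℕ) (hn₀ : 1 ≤ n₀)
    (t : T) (l : ℕ) (hl : 1 ≤ l)
    (h : ℝ → ℝ)
    (h_low : ∀ ε : ℝ, 0 ≤ ε → ε < rad m φ R (l + 1) t → h ε = 0)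
    (h_mid : ∀ k : ℕ, 1 ≤ k → k ≤ l → ∀ ε : ℝ,
      rad m φ R (k + 1) t ≤ ε → ε < rad m φ R k t → h ε = R ^ ((k : ℤ) - (n₀ : ℤ)))
    (h_top : ∀ ε : ℝ, rad m φ R 1 t ≤ ε → h ε = R ^ (-(n₀ : ℤ))) :
    ∫⁻ u, ENNReal.ofReal (ψ (h (dist t u))) ∂m ≤
      ENNReal.ofReal
        (∑ k ∈ Finset.range (l + 1), ψ (R ^ ((k : ℤ) - (n₀ : ℤ))) / φ (R ^ k)) := by
  classical
  have hR0 : (0:ℝ) < R := by linarith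
  have hψ0 : ψ 0 = 0 := hψ.2.2.1
  have hψnn : ∀ x : ℝ, 0 ≤ x → 0 ≤ ψ x := by
    intro x hx
    have := hψ.1 (Set.mem_Ici.mpr le_rfl) (Set.mem_Ici.mpr hx) hx
    simpa [hψ0] using this
  have hφk : ∀ k : ℕ, (1:ℝ) ≤ φ (R ^ k) := by
    intro k
    have h1 : (1:ℝ) ≤ R ^ k := one_le_pow₀ (by linarith)
    calc (1:ℝ) = φ 1 := hφ1.symm
      _ ≤ φ (R ^ k) := hφ.1 (Set.mem_Ici.mpr zero_le_one)
          (Set.mem_Ici.mpr (by linarith)) h1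
  have hψz : ∀ z : ℤ, 0 ≤ ψ (R ^ z) := fun z => hψnn _ (zpow_pos hR0 z).le
  -- pointwise bound by a sum of indicators
  have hpt : ∀ u : T, ENNReal.ofReal (ψ (h (dist t u))) ≤
      (∑ k ∈ Finset.Icc 1 l, (Metric.ball t (rad m φ R k t)).indicator
        (fun _ => ENNReal.ofReal (ψ (R ^ ((k:ℤ) - (n₀:ℤ))))) u)
      + ENNReal.ofReal (ψ (R ^ (-(n₀:ℤ)))) := by
    intro u
    have hε0 : 0 ≤ dist t u := dist_nonneg
    by_cases htop : rad m φ R 1 t ≤ dist t u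
    · rw [h_top _ htop]
      exact le_add_self
    push_neg at htop
    by_cases hlow : dist t u < rad m φ R (l + 1) t
    · rw [h_low _ hε0 hlow, hψ0]
      simp
    push_neg at hlow
    set P : ℕ → Prop := fun j => dist t u < rad m φ R j t with hP
    have hP1 : P 1 := htop
    set k := Nat.findGreatest P l with hk
    have hk1 : 1 ≤ k := Nat.le_findGreatest hl hP1
    have hkl : k ≤ l := Nat.findGreatest_le l
    have hPk : P k := Nat.findGreatest_spec (by omega) hP1
    have hPk1 : ¬ P (k + 1) := by
      rcases lt_or_eq_of_le hkl with hlt | heq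
      · exact Nat.findGreatest_is_greatest (by rw [← hk]; omega) (by omega)
      · rw [heq]; exact not_lt.mpr hlow
    rw [h_mid k hk1 hkl _ (not_lt.mp hPk1) hPk]
    have hu : u ∈ Metric.ball t (rad m φ R k t) := by
      rw [Metric.mem_ball, dist_comm]; exact hPk
    calc ENNReal.ofReal (ψ (R ^ ((k:ℤ) - (n₀:ℤ))))
        = (Metric.ball t (rad m φ R k t)).indicator
            (fun _ => ENNReal.ofReal (ψ (R ^ ((k:ℤ) - (n₀:ℤ))))) u := by
          rw [Set.indicator_of_mem hu]
      _ ≤ ∑ k' ∈ Finset.Icc 1 l, (Metric.ball t (rad m φ R k' t)).indicator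
            (fun _ => ENNReal.ofReal (ψ (R ^ ((k':ℤ) - (n₀:ℤ))))) u :=
          Finset.single_le_sum (f := fun k' => (Metric.ball t (rad m φ R k' t)).indicator
            (fun _ => ENNReal.ofReal (ψ (R ^ ((k':ℤ) - (n₀:ℤ))))) u)
            (fun _ _ => zero_le) (Finset.mem_Icc.mpr ⟨hk1, hkl⟩)
      _ ≤ _ := le_self_add
  calc ∫⁻ u, ENNReal.ofReal (ψ (h (dist t u))) ∂m
      ≤ ∫⁻ u, ((∑ k ∈ Finset.Icc 1 l, (Metric.ball t (rad m φ R k t)).indicator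
          (fun _ => ENNReal.ofReal (ψ (R ^ ((k:ℤ) - (n₀:ℤ))))) u)
          + ENNReal.ofReal (ψ (R ^ (-(n₀:ℤ))))) ∂m := lintegral_mono hpt
    _ = (∑ k ∈ Finset.Icc 1 l, ENNReal.ofReal (ψ (R ^ ((k:ℤ) - (n₀:ℤ)))) *
          m (Metric.ball t (rad m φ R k t))) + ENNReal.ofReal (ψ (R ^ (-(n₀:ℤ)))) := by
        rw [lintegral_add_right _ measurable_const, lintegral_const, measure_univ, mul_one]
        congr 1
        rw [lintegral_finset_sum _
          (fun k _ => measurable_const.indicator measurableSet_ball)]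
        refine Finset.sum_congr rfl fun k _ => ?_
        rw [lintegral_indicator measurableSet_ball, setLIntegral_const]
    _ ≤ ENNReal.ofReal
        (∑ k ∈ Finset.range (l + 1), ψ (R ^ ((k : ℤ) - (n₀ : ℤ))) / φ (R ^ k)) := by
        rw [ENNReal.ofReal_sum_of_nonneg
          (fun k _ => div_nonneg (hψz _) (by linarith [hφk k]))]
        have hsplit : Finset.range (l + 1) = insert 0 (Finset.Icc 1 l) := by
          ext x; simp only [Finset.mem_range, Finset.mem_insert, Finset.mem_Icc]; omega
        rw [hsplit, Finset.sum_insert (by simp), add_comm]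
        refine add_le_add ?_ (Finset.sum_le_sum ?_)
        · have : ((0:ℕ):ℤ) - (n₀:ℤ) = -(n₀:ℤ) := by omega
          simp [this, hφ1]
        · intro k hkmem
          obtain ⟨hk1, hkl⟩ := Finset.mem_Icc.mp hkmem
          obtain ⟨j, rfl⟩ : ∃ j, k = j + 1 := ⟨k - 1, by omega⟩
          have hφpos : (0:ℝ) < φ (R ^ (j + 1)) := by linarith [hφk (j + 1)]
          calc ENNReal.ofReal (ψ (R ^ (((j+1:ℕ):ℤ) - (n₀:ℤ)))) *
                m (Metric.ball t (rad m φ R (j+1) t))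
              ≤ ENNReal.ofReal (ψ (R ^ (((j+1:ℕ):ℤ) - (n₀:ℤ)))) *
                (ENNReal.ofReal (φ (R ^ (j+1))))⁻¹ := by
                gcongr
                exact ball_rad_measure_le m φ R j t hφpos
            _ = ENNReal.ofReal (ψ (R ^ (((j+1:ℕ):ℤ) - (n₀:ℤ))) / φ (R ^ (j+1))) := by
                rw [← ENNReal.ofReal_inv_of_pos hφpos,
                  ← ENNReal.ofReal_mul (hψz _), div_eq_mul_inv]
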